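/- Let n ≥ 1, m ≥ 4n−1, and let R_b ∈ ℂ^{n×n} be the block reference, R_b(t1,t2) = 1 for all t1,t2. Then for all k1, k2 ∈ {0,...,m−1}, the reference scaling factor is S_{R_b}(k1,k2) = (1/m⁴)·[1 + 2(n−1)(1 − cos(2π·k1/m))]·[1 + 2(n−1)(1 − cos(2π·k2/m))]. -/

import Mathlib

open Complex MeasureTheory ProbabilityTheory Matrix ComplexConjugate
open scoped Kronecker

noncomputable section

/-- Zero-extension of a matrix to integer indices: out-of-range entries are `0`. -/
def zext {n1 n2 : ℕ} (X : Matrix (Fin n1) (Fin n2) ℂ) (t1 t2 : ℤ) : ℂ :=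
  if h : 0 ≤ t1 ∧ t1 < (n1 : ℤ) ∧ 0 ≤ t2 ∧ t2 < (n2 : ℤ) then
    X ⟨t1.toNat, by omega⟩ ⟨t2.toNat, by omega⟩
  else 0

/-- Cross-correlation `C_{[X1,X2]}(s1,s2)`, with out-of-range terms taken as `0`. -/
def crossCorr {n1 n2 : ℕ} (X1 X2 : Matrix (Fin n1) (Fin n2) ℂ) (s1 s2 : ℤ) : ℂ :=
  ∑ t1 : Fin n1, ∑ t2 : Fin n2,
    X1 t1 t2 * conj (zext X2 (((t1 : ℕ) : ℤ) - s1) (((t2 : ℕ) : ℤ) - s2))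

/-- Autocorrelation `A_X = C_{[X,X]}`. -/
def autocorr {n1 n2 : ℕ} (X : Matrix (Fin n1) (Fin n2) ℂ) : ℤ → ℤ → ℂ :=
  crossCorr X X

/-- Horizontal concatenation `[X, R]` of two `n × n` matrices. -/
def hcat {n : ℕ} (X R : Matrix (Fin n) (Fin n) ℂ) : Matrix (Fin n) (Fin (2 * n)) ℂ :=
  Matrix.of fun t1 t2 =>
    if h : (t2 : ℕ) < n then X t1 ⟨t2, h⟩ else R t1 ⟨(t2 : ℕ) - n, by omega⟩

/-- The size `m1 × m2` oversampled discrete Fourier transform of an `n1 × n2` signal. -/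
def dft2 {n1 n2 : ℕ} (m1 m2 : ℕ) (Z : Matrix (Fin n1) (Fin n2) ℂ) (k1 k2 : ℕ) : ℂ :=
  ∑ t1 : Fin n1, ∑ t2 : Fin n2,
    Z t1 t2 * Complex.exp (-(2 * (Real.pi : ℂ) * Complex.I) *
      (((t1 : ℕ) : ℂ) * (k1 : ℂ) / (m1 : ℂ) + ((t2 : ℕ) : ℂ) * (k2 : ℂ) / (m2 : ℂ)))

/-- Quadrant cross-correlation `C°_{[X,R]}(i,j) = C_{[X,R]}(i-(n-1), j-(n-1))`. -/
def quadCC {n : ℕ} (X R : Matrix (Fin n) (Fin n) ℂ) : Matrix (Fin n) (Fin n) ℂ :=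
  Matrix.of fun i j =>
    crossCorr X R (((i : ℕ) : ℤ) - ((n : ℤ) - 1)) (((j : ℕ) : ℤ) - ((n : ℤ) - 1))

/-- Columnwise vectorization: the pair `(j, i)` (column `j`, row `i`) indexes entry `X i j`. -/
def vecM {a b : ℕ} (X : Matrix (Fin a) (Fin b) ℂ) : Fin b × Fin a → ℂ :=
  fun p => X p.2 p.1

/-- The matrix `M_R` satisfying `vec (C°_{[X,R]}) = M_R • vec X` (columnwise vectorization). -/
def MR {n : ℕ} (R : Matrix (Fin n) (Fin n) ℂ) :
    Matrix (Fin n × Fin n) (Fin n × Fin n) ℂ :=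
  Matrix.of fun p q =>
    conj (zext R (((q.2 : ℕ) : ℤ) - ((p.2 : ℕ) : ℤ) + ((n : ℤ) - 1))
      (((q.1 : ℕ) : ℤ) - ((p.1 : ℕ) : ℤ) + ((n : ℤ) - 1)))

/-- `P1 · F_LA^*`: row `t ∈ {0,…,n-1}` corresponds to the column `t - (n-1)` of `F_LA`. -/
def P1FLA (n m : ℕ) : Matrix (Fin n) (Fin m) ℂ :=
  Matrix.of fun t k =>
    Complex.exp ((2 * (Real.pi : ℂ) * Complex.I) * ((k : ℕ) : ℂ) *
      (((t : ℕ) : ℂ) - ((n : ℂ) - 1)) / (m : ℂ))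

/-- `P2 · F_RA^*`: row `t ∈ {0,…,n-1}` corresponds to the column `t - (2n-1)` of `F_RA`. -/
def P2FRA (n m : ℕ) : Matrix (Fin n) (Fin m) ℂ :=
  Matrix.of fun t k =>
    Complex.exp ((2 * (Real.pi : ℂ) * Complex.I) * ((k : ℕ) : ℂ) *
      (((t : ℕ) : ℂ) - (2 * (n : ℂ) - 1)) / (m : ℂ))

/-- The referenced-deconvolution matrix
`T_R = (1/m²) · M_R⁻¹ · [(P2 F_RA^*) ⊗ (P1 F_LA^*)]`. -/
def TR {n : ℕ} (m : ℕ) (R : Matrix (Fin n) (Fin n) ℂ) :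
    Matrix (Fin n × Fin n) (Fin m × Fin m) ℂ :=
  ((m : ℂ) ^ 2)⁻¹ • ((MR R)⁻¹ * (P2FRA n m ⊗ₖ P1FLA n m))

/-- The reference scaling factor: `S_R(k1,k2)` is the squared ℓ²-norm of the column of `T_R`
indexed by the pair `(k1, k2)` (i.e. column `m·k1 + k2`). -/
def SR {n : ℕ} (m : ℕ) (R : Matrix (Fin n) (Fin n) ℂ) (k1 k2 : Fin m) : ℝ :=
  ∑ p : Fin n × Fin n, ‖TR m R p (k1, k2)‖ ^ 2

/-- Lower-triangular all-ones matrix `1_L`. -/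
def oneL (n : ℕ) : Matrix (Fin n) (Fin n) ℂ :=
  Matrix.of fun i j => if j ≤ i then 1 else 0

/-- First-order difference matrix `D_n` (the inverse of `1_L`). -/
def Dmat (n : ℕ) : Matrix (Fin n) (Fin n) ℂ :=
  Matrix.of fun i j => if i = j then 1 else if (j : ℕ) + 1 = (i : ℕ) then -1 else 0

/-- Pinhole reference. -/
def pinholeRef (n : ℕ) : Matrix (Fin n) (Fin n) ℂ :=
  Matrix.of fun t1 t2 => if (t1 : ℕ) = n - 1 ∧ (t2 : ℕ) = n - 1 then 1 else 0

/-- Slit reference. -/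
def slitRef (n : ℕ) : Matrix (Fin n) (Fin n) ℂ :=
  Matrix.of fun _ t2 => if (t2 : ℕ) = n - 1 then 1 else 0

/-- Block reference. -/
def blockRef (n : ℕ) : Matrix (Fin n) (Fin n) ℂ :=
  Matrix.of fun _ _ => 1

section Aux

/-- `D_n` acting on a vector takes first-order differences. -/
lemma Dmat_mul_vec {n : ℕ} (g : Fin n → ℂ) (p : Fin n) :
    ∑ q, Dmat n p q * g q =
      g p - if h : 0 < (p : ℕ) then
        g ⟨(p : ℕ) - 1, Nat.lt_of_le_of_lt (Nat.sub_le _ _) p.isLt⟩ else 0 := by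
  have hterm : ∀ q : Fin n, Dmat n p q * g q =
      (if p = q then g q else 0) + (if (q : ℕ) + 1 = (p : ℕ) then -g q else 0) := by
    intro q
    simp only [Dmat, Matrix.of_apply]
    rcases eq_or_ne p q with h | h
    · subst h
      rw [if_pos rfl, if_pos rfl, if_neg (by omega), one_mul, add_zero]
    · rw [if_neg h, if_neg h]
      by_cases h2 : (q : ℕ) + 1 = (p : ℕ)
      · rw [if_pos h2, if_pos h2]; ring
      · rw [if_neg h2, if_neg h2]; ring
  rw [Finset.sum_congr rfl fun q _ => hterm q, Finset.sum_add_distrib, sub_eq_add_neg]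
  congr 1
  · simp
  · by_cases hp : 0 < (p : ℕ)
    · rw [dif_pos hp]
      set p' : Fin n := ⟨(p : ℕ) - 1, Nat.lt_of_le_of_lt (Nat.sub_le _ _) p.isLt⟩ with hp'
      have hiff : ∀ q : Fin n, ((q : ℕ) + 1 = (p : ℕ)) ↔ q = p' := by
        intro q
        constructor
        · intro h; exact Fin.ext (by simp [hp']; omega)
        · intro h; subst h; simp [hp']; omega
      simp_rw [hiff]
      simp
    · rw [dif_neg hp, neg_zero]
      apply Finset.sum_eq_zero
      intro q _
      rw [if_neg (by omega)]

lemma Dmat_mul_oneL (n : ℕ) : Dmat n * oneL n = 1 := by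
  ext i j
  rw [Matrix.mul_apply, Dmat_mul_vec (fun q => oneL n q j) i]
  simp only [oneL, Matrix.of_apply, Matrix.one_apply]
  by_cases hi : 0 < (i : ℕ)
  · rw [dif_pos hi]
    have hj1 : (j ≤ i) ↔ (j : ℕ) ≤ (i : ℕ) := Iff.rfl
    have hj2 : (j ≤ (⟨(i : ℕ) - 1, Nat.lt_of_le_of_lt (Nat.sub_le _ _) i.isLt⟩ : Fin n)) ↔
        (j : ℕ) ≤ (i : ℕ) - 1 := Iff.rfl
    have hij : (i = j) ↔ (i : ℕ) = (j : ℕ) := Fin.ext_iff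
    simp only [hj1, hj2, hij]
    split_ifs <;> first | omega | norm_num
  · rw [dif_neg hi]
    have hj1 : (j ≤ i) ↔ (j : ℕ) ≤ (i : ℕ) := Iff.rfl
    have hij : (i = j) ↔ (i : ℕ) = (j : ℕ) := Fin.ext_iff
    simp only [hj1, hij]
    split_ifs <;> first | omega | norm_num

lemma MR_blockRef (n : ℕ) : MR (blockRef n) = oneL n ⊗ₖ oneL n := by
  ext ⟨p1, p2⟩ ⟨q1, q2⟩
  have h1 := p1.isLt
  have h2 := p2.isLt
  have h3 := q1.isLt
  have h4 := q2.isLt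
  simp only [MR, blockRef, zext, oneL, Matrix.kroneckerMap_apply, Matrix.of_apply,
    Fin.le_def]
  split_ifs <;> first | (exfalso; omega) | simp

lemma MR_blockRef_inv (n : ℕ) : (MR (blockRef n))⁻¹ = Dmat n ⊗ₖ Dmat n := by
  apply Matrix.inv_eq_left_inv
  rw [MR_blockRef, ← Matrix.mul_kronecker_mul, Dmat_mul_oneL, Matrix.one_kronecker_one]

end Aux

lemma norm_exp_mul_I (θ : ℝ) : ‖Complex.exp ((θ : ℂ) * Complex.I)‖ = 1 := by
  rw [Complex.norm_exp_ofReal_mul_I]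

lemma norm_exp_mul_I_sub_one_sq (θ : ℝ) :
    ‖Complex.exp ((θ : ℂ) * Complex.I) - 1‖ ^ 2 = 2 - 2 * Real.cos θ := by
  rw [Complex.sq_norm, Complex.normSq_apply]
  simp only [Complex.sub_re, Complex.sub_im, Complex.one_re, Complex.one_im,
    Complex.exp_ofReal_mul_I_re, Complex.exp_ofReal_mul_I_im]
  nlinarith [Real.sin_sq_add_cos_sq θ]

/-- The key single-factor computation. -/
lemma key_sum (n : ℕ) (θ s : ℝ) :
    ∑ p : Fin (n + 1), ‖∑ q : Fin (n + 1), Dmat (n + 1) p q *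
        Complex.exp ((↑(θ * (((q : ℕ) : ℝ) - s)) : ℂ) * Complex.I)‖ ^ 2
      = 1 + 2 * (n : ℝ) * (1 - Real.cos θ) := by
  set g : Fin (n + 1) → ℂ :=
    fun q => Complex.exp ((↑(θ * (((q : ℕ) : ℝ) - s)) : ℂ) * Complex.I) with hg
  rw [Finset.sum_congr rfl fun p _ => by rw [Dmat_mul_vec g p]]
  rw [Fin.sum_univ_succ]
  have h0 : ‖g 0 - (if h : 0 < ((0 : Fin (n + 1)) : ℕ) then
      g ⟨((0 : Fin (n + 1)) : ℕ) - 1, Nat.lt_of_le_of_lt (Nat.sub_le _ _) (0 : Fin (n+1)).isLt⟩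
      else 0)‖ ^ 2 = 1 := by
    rw [dif_neg (by simp), sub_zero, hg, norm_exp_mul_I, one_pow]
  have hs : ∀ i : Fin n, ‖g i.succ - (if h : 0 < ((i.succ : Fin (n + 1)) : ℕ) then
      g ⟨((i.succ : Fin (n + 1)) : ℕ) - 1, Nat.lt_of_le_of_lt (Nat.sub_le _ _) (i.succ).isLt⟩
      else 0)‖ ^ 2 = 2 - 2 * Real.cos θ := by
    intro i
    rw [dif_pos (by simp)]
    have hv : ((⟨((i.succ : Fin (n + 1)) : ℕ) - 1,
        Nat.lt_of_le_of_lt (Nat.sub_le _ _) (i.succ).isLt⟩ : Fin (n + 1)) : ℕ) = (i : ℕ) := by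
      simp
    have hv2 : ((i.succ : Fin (n + 1)) : ℕ) = (i : ℕ) + 1 := Fin.val_succ i
    rw [hg]
    simp only [hv, hv2, Nat.add_sub_cancel]
    have harg : θ * ((((i : ℕ) + 1 : ℕ) : ℝ) - s) = θ + θ * (((i : ℕ) : ℝ) - s) := by
      push_cast; ring
    rw [harg]
    rw [Complex.ofReal_add, add_mul, Complex.exp_add]
    rw [show Complex.exp ((θ : ℂ) * Complex.I) * Complex.exp ((↑(θ * (((i : ℕ) : ℝ) - s)) : ℂ) * Complex.I)
          - Complex.exp ((↑(θ * (((i : ℕ) : ℝ) - s)) : ℂ) * Complex.I)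
        = Complex.exp ((↑(θ * (((i : ℕ) : ℝ) - s)) : ℂ) * Complex.I) *
          (Complex.exp ((θ : ℂ) * Complex.I) - 1) by ring]
    rw [norm_mul, mul_pow, norm_exp_mul_I, one_pow, one_mul, norm_exp_mul_I_sub_one_sq]
  rw [h0, Finset.sum_congr rfl fun i _ => hs i, Finset.sum_const, Finset.card_univ,
    Fintype.card_fin, nsmul_eq_mul]
  ring

/-- The reference scaling factor of the block reference is
`S_{R_b}(k1,k2) = (1/m⁴)·[1 + 2(n-1)(1-cos(2π·k1/m))]·[1 + 2(n-1)(1-cos(2π·k2/m))]`. -/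
theorem block_scaling_factor
    (n m : ℕ) (hn : 1 ≤ n) (hm : 4 * n - 1 ≤ m) (k1 k2 : Fin m) :
    SR m (blockRef n) k1 k2 =
      (1 / (m : ℝ) ^ 4) *
        (1 + 2 * ((n : ℝ) - 1) * (1 - Real.cos (2 * Real.pi * ((k1 : ℕ) : ℝ) / (m : ℝ)))) *
        (1 + 2 * ((n : ℝ) - 1) * (1 - Real.cos (2 * Real.pi * ((k2 : ℕ) : ℝ) / (m : ℝ)))) := by
  obtain ⟨n', rfl⟩ : ∃ n', n = n' + 1 := ⟨n - 1, by omega⟩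
  set θ1 : ℝ := 2 * Real.pi * ((k1 : ℕ) : ℝ) / (m : ℝ) with hθ1
  set θ2 : ℝ := 2 * Real.pi * ((k2 : ℕ) : ℝ) / (m : ℝ) with hθ2
  set s1 : ℝ := 2 * ((n' + 1 : ℕ) : ℝ) - 1 with hs1
  set s2 : ℝ := ((n' + 1 : ℕ) : ℝ) - 1 with hs2
  have hP2 : ∀ q : Fin (n' + 1), P2FRA (n' + 1) m q k1 =
      Complex.exp ((↑(θ1 * (((q : ℕ) : ℝ) - s1)) : ℂ) * Complex.I) := by
    intro q
    simp only [P2FRA, Matrix.of_apply]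
    congr 1
    rw [hθ1, hs1]
    push_cast
    ring
  have hP1 : ∀ q : Fin (n' + 1), P1FLA (n' + 1) m q k2 =
      Complex.exp ((↑(θ2 * (((q : ℕ) : ℝ) - s2)) : ℂ) * Complex.I) := by
    intro q
    simp only [P1FLA, Matrix.of_apply]
    congr 1
    rw [hθ2, hs2]
    push_cast
    ring
  have hTR : ∀ p1 p2 : Fin (n' + 1), TR m (blockRef (n' + 1)) (p1, p2) (k1, k2) =
      ((m : ℂ) ^ 2)⁻¹ *
        ((∑ q, Dmat (n' + 1) p1 q *
            Complex.exp ((↑(θ1 * (((q : ℕ) : ℝ) - s1)) : ℂ) * Complex.I)) *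
         (∑ q, Dmat (n' + 1) p2 q *
            Complex.exp ((↑(θ2 * (((q : ℕ) : ℝ) - s2)) : ℂ) * Complex.I))) := by
    intro p1 p2
    rw [TR, MR_blockRef_inv, ← Matrix.mul_kronecker_mul]
    simp only [Matrix.smul_apply, smul_eq_mul, Matrix.kroneckerMap_apply, Matrix.mul_apply]
    congr 1
    congr 1
    · exact Finset.sum_congr rfl fun q _ => by rw [hP2 q]
    · exact Finset.sum_congr rfl fun q _ => by rw [hP1 q]
  have hnorm : ∀ z w : ℂ, ‖((m : ℂ) ^ 2)⁻¹ * (z * w)‖ ^ 2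
      = (1 / (m : ℝ) ^ 4) * (‖z‖ ^ 2 * ‖w‖ ^ 2) := by
    intro z w
    rw [norm_mul, norm_mul, norm_inv, norm_pow, Complex.norm_natCast]
    ring
  simp only [SR]
  rw [Fintype.sum_prod_type]
  simp only [hTR, hnorm]
  simp only [← mul_assoc, ← Finset.mul_sum, ← Finset.sum_mul]
  rw [key_sum n' θ1 s1, key_sum n' θ2 s2]
  have hc : ((n' + 1 : ℕ) : ℝ) = (n' : ℝ) + 1 := by push_cast; ring
  rw [hs2, hc]
  ring
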